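/- If a predicate φ : ℕ^Σ → {true, false} is implemented by a protocol that is both shadow-permitting and truncatable, then φ is a counting predicate. -/

import Mathlib

open scoped Classical

/-- A configuration: finitely many agents (identified by natural numbers) with states in `Q`,
and finitely many packets (identified by natural numbers) carrying messages in `M`.
`agentState a = none` means `a` is not an agent of the configuration, and similarly
`packetMsg p = none` means `p` is not a packet of the configuration. -/
structure Config (Q : Type) (M : Type) where
  agentState : ℕ → Option Q
  packetMsg : ℕ → Option M
  finAgents : {a : ℕ | agentState a ≠ none}.Finite
  finPackets : {p : ℕ | packetMsg p ≠ none}.Finite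

namespace Config

variable {Q M : Type}

/-- The set `Dom(C_A)` of agents of a configuration. -/
def agentsDom (C : Config Q M) : Set ℕ := {a | C.agentState a ≠ none}

/-- The set `Dom(C_P)` of packets of a configuration. -/
def packetsDom (C : Config Q M) : Set ℕ := {p | C.packetMsg p ≠ none}

/-- Update (add, change or remove) the state of agent `a`. -/
def setAgent (C : Config Q M) (a : ℕ) (s : Option Q) : Config Q M where
  agentState := Function.update C.agentState a s
  packetMsg := C.packetMsg
  finAgents := by
    apply Set.Finite.subset (C.finAgents.union (Set.finite_singleton a))
    intro x hx
    rcases eq_or_ne x a with h | h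
    · exact Or.inr h
    · exact Or.inl (by simpa [Function.update, h] using hx)
  finPackets := C.finPackets

/-- Update (add, change or remove) the content of packet `p`. -/
def setPacket (C : Config Q M) (p : ℕ) (m : Option M) : Config Q M where
  agentState := C.agentState
  packetMsg := Function.update C.packetMsg p m
  finAgents := C.finAgents
  finPackets := by
    apply Set.Finite.subset (C.finPackets.union (Set.finite_singleton p))
    intro x hx
    rcases eq_or_ne x p with h | h
    · exact Or.inr h
    · exact Or.inl (by simpa [Function.update, h] using hx)

/-- Rename agents and packets by permutations of `ℕ`:
the agent `a` of the result is in the state of agent `πA a` of `C`. -/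
def rename (C : Config Q M) (πA πP : Equiv.Perm ℕ) : Config Q M where
  agentState := fun a => C.agentState (πA a)
  packetMsg := fun p => C.packetMsg (πP p)
  finAgents := by
    have h : {a : ℕ | C.agentState (πA a) ≠ none} = πA ⁻¹' C.agentsDom := rfl
    rw [h]
    exact C.finAgents.preimage πA.injective.injOn
  finPackets := by
    have h : {p : ℕ | C.packetMsg (πP p) ≠ none} = πP ⁻¹' C.packetsDom := rfl
    rw [h]
    exact C.finPackets.preimage πP.injective.injOn

/-- The number of agents of `C` in state `q`. -/
noncomputable def numInState (C : Config Q M) (q : Q) : ℕ :=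
  {a | C.agentState a = some q}.ncard

/-- The number of packets of `C` carrying message `m` (the supply of `m` in `C`). -/
noncomputable def supply (C : Config Q M) (m : M) : ℕ :=
  {p | C.packetMsg p = some m}.ncard

end Config

/-- The type of step relations: `Step C A C'` states that there is a step
from `C` to `C'` whose set of active agents is `A`. -/
abbrev StepRel (Q M : Type) := Config Q M → Set ℕ → Config Q M → Prop

/-- The conditions that the step relation of a protocol must satisfy:
agent conservation, agent and packet anonymity, possibility to ignore extra packets,
and possibility to add passive agents. -/
structure IsProtocolStep {Q M : Type} (Step : StepRel Q M) : Prop where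
  active_subset : ∀ {C A C'}, Step C A C' → A ⊆ C.agentsDom
  agent_conservation : ∀ {C A C'}, Step C A C' → C.agentsDom = C'.agentsDom
  anonymity : ∀ (πA πP : Equiv.Perm ℕ) {C A C'}, Step C A C' →
    Step (C.rename πA πP) (πA ⁻¹' A) (C'.rename πA πP)
  ignore_packets : ∀ {C A C'} (p : ℕ) (m : M), Step C A C' →
    C.packetMsg p = none → C'.packetMsg p = none →
    Step (C.setPacket p (some m)) A (C'.setPacket p (some m))
  add_passive : ∀ {C A C'} (a : ℕ) (q : Q), Step C A C' →
    C.agentState a = none → C'.agentState a = none →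
    ∃ q' : Q, Step (C.setAgent a (some q)) A (C'.setAgent a (some q'))

/-- `C → C'` : a step from `C` to `C'` with some set of active agents. -/
def stepTo {Q M : Type} (Step : StepRel Q M) (C C' : Config Q M) : Prop := ∃ A, Step C A C'

/-- Reachability via finitely many steps. -/
def Reaches {Q M : Type} (Step : StepRel Q M) : Config Q M → Config Q M → Prop :=
  Relation.ReflTransGen (stepTo Step)

/-- An infinite execution: at each moment either nothing changes or a single step occurs. -/
def IsExecution {Q M : Type} (Step : StepRel Q M) (E : ℕ → Config Q M) : Prop :=
  ∀ i, E (i + 1) = E i ∨ stepTo Step (E i) (E (i + 1))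

/-- A finite execution of length `n`, given by the first `n + 1` values of `E`. -/
def IsFinExecution {Q M : Type} (Step : StepRel Q M) (n : ℕ) (E : ℕ → Config Q M) : Prop :=
  ∀ i < n, E (i + 1) = E i ∨ stepTo Step (E i) (E (i + 1))

/-- The default fairness condition: every configuration either becomes unreachable from
some moment on, or occurs infinitely many times in the execution. -/
def DefaultFair {Q M : Type} (Step : StepRel Q M) (E : ℕ → Config Q M) : Prop :=
  ∀ C : Config Q M,
    (∃ n, ∀ m, n ≤ m → ¬ Reaches Step (E m) C) ∨ (∀ n, ∃ m, n ≤ m ∧ E m = C)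

/-- A fairness condition is eventual if every finite execution can be continued
to an infinite execution satisfying it. -/
def Eventual {Q M : Type} (Step : StepRel Q M) (Φ : (ℕ → Config Q M) → Prop) : Prop :=
  ∀ (n : ℕ) (E : ℕ → Config Q M), IsFinExecution Step n E →
    ∃ E' : ℕ → Config Q M, (∀ i ≤ n, E' i = E i) ∧ IsExecution Step E' ∧ Φ E'

/-- A fairness condition ensures activity if whenever an execution satisfying it is
constant from some moment on, no step leads from the final configuration to a
different configuration. -/
def EnsuresActivity {Q M : Type} (Step : StepRel Q M) (Φ : (ℕ → Config Q M) → Prop) : Prop :=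
  ∀ E, IsExecution Step E → Φ E → ∀ n, (∀ m, n ≤ m → E m = E n) →
    ∀ C', stepTo Step (E n) C' → C' = E n

/-- A protocol: input mapping, individual output function, step relation
and fairness condition (the finite sets of states `Q`, messages `M` and input
letters `Sg` are type parameters). -/
structure Protocol (Q M Sg : Type) where
  Iin : Sg → Q
  out : Q → Bool
  Step : StepRel Q M
  fair : (ℕ → Config Q M) → Prop

/-- `C` is a consensus with output value `b`. -/
def IsConsensus {Q M : Type} (out : Q → Bool) (C : Config Q M) (b : Bool) : Prop :=
  ∀ a q, C.agentState a = some q → out q = b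

/-- `C` is a stable consensus with output value `b`. -/
def IsStableConsensus {Q M : Type} (Step : StepRel Q M) (out : Q → Bool)
    (C : Config Q M) (b : Bool) : Prop :=
  ∀ D, Reaches Step C D → IsConsensus out D b

/-- `C` is an input configuration for the input `x` : no packets, and for every state `q`
exactly as many agents in `q` as prescribed by `x` and the input mapping. -/
def IsInputConfig {Q M Sg : Type} [Fintype Sg] (Iin : Sg → Q) (x : Sg → ℕ)
    (C : Config Q M) : Prop :=
  (∀ p, C.packetMsg p = none) ∧
  ∀ q : Q, C.numInState q = ∑ σ : Sg, if Iin σ = q then x σ else 0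

/-- The protocol `P` implements the predicate `φ` : every fair execution from an input
configuration for `x` reaches a stable consensus with output value `φ x`. -/
def Implements {Q M Sg : Type} [Fintype Sg] (P : Protocol Q M Sg)
    (φ : (Sg → ℕ) → Bool) : Prop :=
  ∀ (x : Sg → ℕ) (C0 : Config Q M), IsInputConfig P.Iin x C0 →
    ∀ E : ℕ → Config Q M, IsExecution P.Step E → P.fair E → E 0 = C0 →
      ∃ n, IsStableConsensus P.Step P.out (E n) (φ x)

/-- The unreliable version of a step relation: every step `C --A--> C'` additionally
allows all degraded steps `C --A--> C''` satisfying population preservation,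
state preservation, message preservation, and reliance on active agents. -/
def UnrelStep {Q M : Type} (Step : StepRel Q M) : StepRel Q M := fun C A C'' =>
  Step C A C'' ∨ ∃ C', Step C A C' ∧
    C''.agentsDom = C'.agentsDom ∧
    C''.packetMsg = C'.packetMsg ∧
    (∀ a, C''.agentState a = C.agentState a ∨ C''.agentState a = C'.agentState a) ∧
    ((∀ a ∉ A, C''.agentState a = C.agentState a) ∨
      (∀ a ∈ A, C''.agentState a = C'.agentState a))

/-- The unreliable protocol corresponding to `P`. -/
def Unreliable {Q M Sg : Type} (P : Protocol Q M Sg) : Protocol Q M Sg :=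
  { P with Step := UnrelStep P.Step }

/-- A shadow extension of the execution `E` around the agent `a`, using the fresh
agent `a'` : a set of executions starting from `E 0` with the extra agent `a'` added in
the state of `a`, such that removing `a'` from any of them yields `E`, and at every
moment some execution of the set has `a` and `a'` in the same state. -/
def IsShadowExtension {Q M : Type} (Step : StepRel Q M) (E : ℕ → Config Q M)
    (a a' : ℕ) (Ext : Set (ℕ → Config Q M)) : Prop :=
  a ∈ (E 0).agentsDom ∧ a' ∉ (E 0).agentsDom ∧
  (∀ E' ∈ Ext, IsExecution Step E' ∧ (E' 0).agentState a' = (E 0).agentState a ∧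
    ∀ k, (E' k).setAgent a' none = E k) ∧
  ∀ k, ∃ E' ∈ Ext, (E' k).agentState a' = (E' k).agentState a

/-- A protocol is shadow-permitting if from every configuration there is a fair
execution having a shadow extension around every agent. -/
def ShadowPermitting {Q M Sg : Type} (P : Protocol Q M Sg) : Prop :=
  ∀ C : Config Q M, ∃ E, IsExecution P.Step E ∧ E 0 = C ∧ P.fair E ∧
    ∀ a ∈ C.agentsDom, ∃ a' ∉ C.agentsDom,
      ∃ Ext, IsShadowExtension P.Step E a a' Ext

/-- Truncatability with constant `K` : adding a fresh agent in a state already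
represented by at least `K` agents of a stable consensus yields a stable consensus. -/
def TruncatableWith {Q M : Type} (Step : StepRel Q M) (out : Q → Bool) (K : ℕ) : Prop :=
  ∀ (C : Config Q M) (b : Bool) (q : Q), IsStableConsensus Step out C b →
    K ≤ C.numInState q → ∀ a', C.agentState a' = none →
      IsStableConsensus Step out (C.setAgent a' (some q)) b

/-- The cube with lower bounds `l` and (possibly infinite) upper bounds `u`. -/
def cube {Sg : Type} (l : Sg → ℕ) (u : Sg → ℕ∞) : Set (Sg → ℕ) :=
  {x | ∀ σ, l σ ≤ x σ ∧ (x σ : ℕ∞) ≤ u σ}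

/-- A counting set is a finite union of cubes. -/
def IsCountingSet {Sg : Type} (S : Set (Sg → ℕ)) : Prop :=
  ∃ (n : ℕ) (l : Fin n → Sg → ℕ) (u : Fin n → Sg → ℕ∞), S = ⋃ j, cube (l j) (u j)

/-- A counting predicate is the membership predicate of a counting set. -/
def IsCountingPred {Sg : Type} (φ : (Sg → ℕ) → Bool) : Prop :=
  IsCountingSet {x | φ x = true}

namespace Config
variable {Q M : Type}

theorem ext' {C D : Config Q M} (hA : C.agentState = D.agentState)
    (hP : C.packetMsg = D.packetMsg) : C = D := by
  cases C; cases D; simp_all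

theorem setAgent_agentState (C : Config Q M) (a : ℕ) (s : Option Q) (b : ℕ) :
    (C.setAgent a s).agentState b = if b = a then s else C.agentState b := by
  simp [Config.setAgent, Function.update]

theorem setAgent_packetMsg (C : Config Q M) (a : ℕ) (s : Option Q) :
    (C.setAgent a s).packetMsg = C.packetMsg := rfl

theorem finite_numInState_set (C : Config Q M) (q : Q) :
    {a | C.agentState a = some q}.Finite :=
  C.finAgents.subset (fun a ha => by simp only [Set.mem_setOf_eq] at *; rw [ha]; simp)

theorem numInState_setAgent_fresh (C : Config Q M) (a' : ℕ) (q : Q)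
    (h : C.agentState a' = none) (q' : Q) :
    (C.setAgent a' (some q)).numInState q'
      = C.numInState q' + (if q' = q then 1 else 0) := by
  rcases eq_or_ne q' q with rfl | hne
  · simp only [if_pos rfl]
    have hset : {a | (C.setAgent a' (some q')).agentState a = some q'}
        = insert a' {a | C.agentState a = some q'} := by
      ext b
      simp only [Set.mem_setOf_eq, Set.mem_insert_iff, setAgent_agentState]
      rcases eq_or_ne b a' with rfl | hb
      · simp
      · simp [hb]
    rw [Config.numInState, hset, Set.ncard_insert_of_notMem
        (by simp only [Set.mem_setOf_eq, h]; exact fun hc => by cases hc)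
        (finite_numInState_set C q')]
    rfl
  · simp only [if_neg hne, add_zero]
    have hset : {a | (C.setAgent a' (some q)).agentState a = some q'}
        = {a | C.agentState a = some q'} := by
      ext b
      simp only [Set.mem_setOf_eq, setAgent_agentState]
      rcases eq_or_ne b a' with rfl | hb
      · simp only [if_pos rfl, h]
        constructor
        · intro hc; exact absurd (Option.some_injective _ hc) (Ne.symm hne)
        · intro hc; cases hc
      · simp [hb]
    rw [Config.numInState, hset]; rfl

theorem le_numInState (C : Config Q M) (q : Q) {a : ℕ} (h : C.agentState a = some q) :
    1 ≤ C.numInState q := by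
  exact (Set.ncard_pos (finite_numInState_set C q)).mpr ⟨a, h⟩

end Config

section ExecLemmas
variable {Q M : Type} {Step : StepRel Q M}

theorem reaches_of_exec {E : ℕ → Config Q M} (hE : IsExecution Step E) :
    ∀ {i j : ℕ}, i ≤ j → Reaches Step (E i) (E j) := by
  intro i j hij
  induction j with
  | zero => rw [Nat.le_zero.mp hij]; exact Relation.ReflTransGen.refl
  | succ j ih =>
    rcases Nat.lt_or_ge i (j+1) with hlt | hge
    · have hj : i ≤ j := Nat.lt_succ_iff.mp hlt
      rcases hE j with heq | hstep
      · rw [heq]; exact ih hj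
      · exact Relation.ReflTransGen.tail (ih hj) hstep
    · rw [Nat.le_antisymm hij hge]; exact Relation.ReflTransGen.refl

theorem agentsDom_of_step (hP : IsProtocolStep Step) {C C' : Config Q M}
    (h : stepTo Step C C') : C.agentsDom = C'.agentsDom := by
  obtain ⟨A, hA⟩ := h; exact hP.agent_conservation hA

theorem agentsDom_of_reaches (hP : IsProtocolStep Step) {C C' : Config Q M}
    (h : Reaches Step C C') : C.agentsDom = C'.agentsDom := by
  induction h with
  | refl => rfl
  | tail _ hstep ih => exact ih.trans (agentsDom_of_step hP hstep)

end ExecLemmas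
theorem exists_input_config {Q M Sg : Type} [Fintype Sg] [Nonempty Sg]
    (Iin : Sg → Q) (x : Sg → ℕ) :
    ∃ C : Config Q M, IsInputConfig Iin x C := by
  classical
  set k := Fintype.card Sg with hk
  have hk0 : 0 < k := Fintype.card_pos
  set e : Sg ≃ Fin k := Fintype.equivFin Sg with he
  set σof : ℕ → Sg := fun n => e.symm ⟨n % k, Nat.mod_lt n hk0⟩ with hσof
  have hσof_eq : ∀ (n : ℕ) (σ : Sg), σof n = σ ↔ n % k = (e σ : ℕ) := by
    intro n σ
    rw [show σof n = e.symm ⟨n % k, Nat.mod_lt n hk0⟩ from rfl,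
      Equiv.symm_apply_eq, Fin.ext_iff]
  set F : Finset ℕ := Finset.univ.biUnion
      (fun σ : Sg => (Finset.range (x σ)).image (fun i => k * i + (e σ : ℕ))) with hF
  have hmem : ∀ (σ : Sg) (n : ℕ),
      n ∈ (Finset.range (x σ)).image (fun i => k * i + (e σ : ℕ))
        → σof n = σ := by
    intro σ n hn
    simp only [Finset.mem_image, Finset.mem_range] at hn
    obtain ⟨i, _, rfl⟩ := hn
    rw [hσof_eq]
    rw [Nat.mul_add_mod]
    exact Nat.mod_eq_of_lt (e σ).isLt
  have hdisj : ∀ σ ∈ (Finset.univ : Finset Sg), ∀ τ ∈ (Finset.univ : Finset Sg),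
      σ ≠ τ → Disjoint ((Finset.range (x σ)).image (fun i => k * i + (e σ : ℕ)))
        ((Finset.range (x τ)).image (fun i => k * i + (e τ : ℕ))) := by
    intro σ _ τ _ hστ
    rw [Finset.disjoint_left]
    intro n hnσ hnτ
    have h1 := hmem σ n hnσ
    have h2 := hmem τ n hnτ
    exact hστ (h1 ▸ h2 ▸ rfl)
  refine ⟨⟨fun n => if n ∈ F then some (Iin (σof n)) else none, fun _ => none,
      ?_, Set.finite_empty.subset (by intro p hp; exact absurd rfl hp)⟩, fun p => rfl, ?_⟩
  · apply F.finite_toSet.subset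
    intro n hn
    simp only [Set.mem_setOf_eq] at hn
    by_contra hnF
    have hnF' : n ∉ F := by simpa using hnF
    rw [if_neg hnF'] at hn
    exact hn rfl
  · intro q
    have hset : {a | (if a ∈ F then some (Iin (σof a)) else none) = some q}
        = ↑(F.filter (fun n => Iin (σof n) = q)) := by
      ext n
      simp only [Set.mem_setOf_eq, Finset.coe_filter, Set.mem_setOf_eq]
      by_cases hn : n ∈ F
      · simp [hn]
      · simp [hn]
    show {a | (if a ∈ F then some (Iin (σof a)) else none) = some q}.ncard = _
    rw [hset, Set.ncard_coe_finset, hF, Finset.filter_biUnion,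
      Finset.card_biUnion]
    · apply Finset.sum_congr rfl
      intro σ _
      by_cases hq : Iin σ = q
      · rw [if_pos hq]
        have : ((Finset.range (x σ)).image (fun i => k * i + (e σ : ℕ))).filter
            (fun n => Iin (σof n) = q)
            = (Finset.range (x σ)).image (fun i => k * i + (e σ : ℕ)) := by
          apply Finset.filter_true_of_mem
          intro n hn
          rw [hmem σ n hn, hq]
        rw [this, Finset.card_image_of_injective _
          (fun i j hij => Nat.eq_of_mul_eq_mul_left hk0 (by omega : k * i = k * j)), Finset.card_range]
      · rw [if_neg hq]
        have : ((Finset.range (x σ)).image (fun i => k * i + (e σ : ℕ))).filter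
            (fun n => Iin (σof n) = q) = ∅ := by
          apply Finset.filter_false_of_mem
          intro n hn
          rw [hmem σ n hn]
          exact hq
        rw [this, Finset.card_empty]
    · intro σ hσ τ hτ hστ
      exact Finset.disjoint_filter_filter (hdisj σ hσ τ hτ hστ)
theorem counting_of_local {Sg : Type} [Fintype Sg] [Nonempty Sg]
    (φ : (Sg → ℕ) → Bool) (K : ℕ)
    (h : ∀ (x : Sg → ℕ) (σ : Sg), K ≤ x σ →
      φ (Function.update x σ (x σ + 1)) = φ x) :
    IsCountingPred φ := by
  have hcap : ∀ (N : ℕ) (x : Sg → ℕ), (∑ σ, (x σ - K)) ≤ N →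
      φ x = φ (fun σ => min (x σ) K) := by
    intro N
    induction N with
    | zero =>
      intro x hx
      have hall : ∀ σ, x σ ≤ K := by
        intro σ
        have h0 : ∑ σ, (x σ - K) = 0 := Nat.le_zero.mp hx
        have := Finset.sum_eq_zero_iff.mp h0 σ (Finset.mem_univ σ)
        omega
      have : (fun σ => min (x σ) K) = x := by
        funext σ; exact min_eq_left (hall σ)
      rw [this]
    | succ N ih =>
      intro x hx
      by_cases hall : ∀ σ, x σ ≤ K
      · have : (fun σ => min (x σ) K) = x := by
          funext σ; exact min_eq_left (hall σ)
        rw [this]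
      · push_neg at hall
        obtain ⟨σ, hσ⟩ := hall
        set y : Sg → ℕ := Function.update x σ (x σ - 1) with hy
        have hyσ : y σ = x σ - 1 := Function.update_self _ _ _
        have hyτ : ∀ τ, τ ≠ σ → y τ = x τ := fun τ hτ => Function.update_of_ne hτ _ _
        have hxy : Function.update y σ (y σ + 1) = x := by
          funext τ
          rcases eq_or_ne τ σ with rfl | hτ
          · rw [Function.update_self, hyσ]; omega
          · rw [Function.update_of_ne hτ, hyτ τ hτ]
        have hKy : K ≤ y σ := by omega
        have h1 : φ x = φ y := by rw [← hxy] at *; exact h y σ hKy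
        have hmin : (fun τ => min (y τ) K) = (fun τ => min (x τ) K) := by
          funext τ
          rcases eq_or_ne τ σ with rfl | hτ
          · rw [hyσ]; omega
          · rw [hyτ τ hτ]
        have hsum : ∑ τ, (y τ - K) ≤ N := by
          have hlt : ∑ τ, (y τ - K) < ∑ τ, (x τ - K) := by
            apply Finset.sum_lt_sum
            · intro τ _
              rcases eq_or_ne τ σ with rfl | hτ
              · rw [hyσ]; omega
              · rw [hyτ τ hτ]
            · exact ⟨σ, Finset.mem_univ σ, by rw [hyσ]; omega⟩
          omega
        rw [h1, ih y hsum, hmin]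
  have hcap' : ∀ x : Sg → ℕ, φ x = φ (fun σ => min (x σ) K) :=
    fun x => hcap _ x le_rfl
  classical
  set n := Fintype.card (Sg → Fin (K + 1)) with hn
  set e : Fin n ≃ (Sg → Fin (K + 1)) := (Fintype.equivFin (Sg → Fin (K + 1))).symm with he
  refine ⟨n, fun j σ => if φ (fun τ => (e j τ : ℕ)) then (e j σ : ℕ) else 1,
    fun j σ => if φ (fun τ => (e j τ : ℕ)) then
      (if (e j σ : ℕ) = K then ⊤ else ((e j σ : ℕ) : ℕ∞)) else 0, ?_⟩
  ext x
  simp only [Set.mem_setOf_eq, Set.mem_iUnion]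
  constructor
  · intro hx
    refine ⟨e.symm (fun σ => ⟨min (x σ) K, by omega⟩), ?_⟩
    have hej : ∀ σ, (e (e.symm (fun σ => ⟨min (x σ) K, by omega⟩)) σ : ℕ) = min (x σ) K := by
      intro σ; rw [Equiv.apply_symm_apply]
    have hφcap : φ (fun τ => min (x τ) K) = true := by rw [← hcap' x]; exact hx
    intro σ
    simp only [hej, hφcap, if_true]
    refine ⟨min_le_left _ _, ?_⟩
    split
    · exact le_top
    · next hne =>
      have hxK : min (x σ) K = x σ := by omega
      rw [hxK]
  · rintro ⟨j, hj⟩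
    by_cases hφ : φ (fun τ => (e j τ : ℕ)) = true
    · have hmin : ∀ σ, min (x σ) K = (e j σ : ℕ) := by
        intro σ
        have h1 := (hj σ).1
        have h2 := (hj σ).2
        simp only [hφ, if_true] at h1 h2
        have hle : (e j σ : ℕ) ≤ K := by
          have := (e j σ).isLt; omega
        rcases eq_or_ne ((e j σ : ℕ)) K with heq | hne
        · rw [heq]; omega
        · rw [if_neg hne] at h2
          have : x σ ≤ (e j σ : ℕ) := by exact_mod_cast h2
          omega
      have : (fun σ => min (x σ) K) = fun τ => (e j τ : ℕ) := by
        funext σ; exact hmin σ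
      rw [hcap' x, this]; exact hφ
    · exfalso
      obtain ⟨σ⟩ := ‹Nonempty Sg›
      have h1 := (hj σ).1
      have h2 := (hj σ).2
      simp only [if_neg hφ] at h1 h2
      have : (x σ : ℕ∞) ≤ 0 := h2
      have : x σ = 0 := by exact_mod_cast le_antisymm this zero_le
      omega
theorem key_mono {Q M Sg : Type} [Fintype Q] [Nonempty Q] [Fintype Sg] [Nonempty Sg]
    (P : Protocol Q M Sg) (hP : IsProtocolStep P.Step)
    (hEv : Eventual P.Step P.fair) (hshadow : ShadowPermitting P)
    {K : ℕ} (htr : TruncatableWith P.Step P.out K)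
    (φ : (Sg → ℕ) → Bool) (himpl : Implements P φ)
    (x : Sg → ℕ) (σ : Sg) (hx : Fintype.card Q * K + 1 ≤ x σ) :
    φ (Function.update x σ (x σ + 1)) = φ x := by
  classical
  obtain ⟨C0, hC0⟩ := exists_input_config (Q := Q) (M := M) P.Iin x
  obtain ⟨E, hEexec, hE0, hEfair, hEsh⟩ := hshadow C0
  obtain ⟨n, hstab⟩ := himpl x C0 hC0 E hEexec hEfair hE0
  -- the set of agents initially in state `Iin σ`
  set S : Finset ℕ := (Config.finite_numInState_set C0 (P.Iin σ)).toFinset with hS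
  have hSmem : ∀ b, b ∈ S ↔ C0.agentState b = some (P.Iin σ) := by
    intro b; rw [hS, Set.Finite.mem_toFinset]; rfl
  have hScard : x σ ≤ S.card := by
    have h1 : S.card = C0.numInState (P.Iin σ) := by
      rw [hS, Config.numInState,
        Set.ncard_eq_toFinset_card _ (Config.finite_numInState_set C0 (P.Iin σ))]
    rw [h1, hC0.2 (P.Iin σ)]
    have h2 := Finset.single_le_sum
      (f := fun τ => if P.Iin τ = P.Iin σ then x τ else 0)
      (fun τ _ => by positivity) (Finset.mem_univ σ)
    simpa using h2
  -- every agent of `S` has a state at time `n`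
  have hdomE : (E 0).agentsDom = (E n).agentsDom :=
    agentsDom_of_reaches hP (reaches_of_exec hEexec (Nat.zero_le n))
  have hstate : ∀ b ∈ S, ∃ qb : Q, (E n).agentState b = some qb := by
    intro b hb
    have hbdom : b ∈ (E 0).agentsDom := by
      rw [hE0]
      intro hcon
      rw [(hSmem b).mp hb] at hcon
      cases hcon
    rw [hdomE] at hbdom
    exact Option.ne_none_iff_exists'.mp hbdom
  set f : ℕ → Q := fun b => ((E n).agentState b).getD (Classical.arbitrary Q) with hf
  have hfiber : ∃ q : Q, K < (S.filter (fun b => f b = q)).card := by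
    obtain ⟨q, _, hq⟩ := Finset.exists_lt_card_fiber_of_mul_lt_card_of_maps_to
      (s := S) (f := f) (t := (Finset.univ : Finset Q)) (n := K)
      (fun b _ => Finset.mem_univ (f b))
      (by rw [Finset.card_univ]; omega)
    exact ⟨q, hq⟩
  obtain ⟨q, hq⟩ := hfiber
  have hsub : ↑(S.filter (fun b => f b = q)) ⊆ {b | (E n).agentState b = some q} := by
    intro b hb
    simp only [Finset.coe_filter, Set.mem_setOf_eq] at hb
    obtain ⟨qb, hqb⟩ := hstate b hb.1
    have hfb : f b = qb := by rw [hf]; simp [hqb]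
    simp only [Set.mem_setOf_eq, hqb]
    rw [← hb.2, hfb]
  have hnum : K ≤ (E n).numInState q := by
    calc K ≤ (S.filter (fun b => f b = q)).card := le_of_lt hq
      _ = (↑(S.filter (fun b => f b = q)) : Set ℕ).ncard := (Set.ncard_coe_finset _).symm
      _ ≤ (E n).numInState q :=
        Set.ncard_le_ncard hsub (Config.finite_numInState_set _ _)
  -- pick an agent `a` of `S` whose state at time `n` is the popular state `q`
  have : (S.filter (fun b => f b = q)).Nonempty := Finset.card_pos.mp (by omega)
  obtain ⟨a, ha⟩ := this
  have haS : a ∈ S := (Finset.mem_filter.mp ha).1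
  have haq : (E n).agentState a = some q := by
    obtain ⟨qa, hqa⟩ := hstate a haS
    have hfa : f a = qa := by rw [hf]; simp [hqa]
    have : qa = q := by rw [← hfa]; exact (Finset.mem_filter.mp ha).2
    rw [hqa, this]
  -- the shadow extension around `a`
  have hadom : a ∈ C0.agentsDom := by
    intro hcon; rw [(hSmem a).mp haS] at hcon; cases hcon
  obtain ⟨a', ha'dom, Ext, hExt⟩ := hEsh a hadom
  obtain ⟨haDom0, ha'Dom0, hall, hsame⟩ := hExt
  obtain ⟨E', hE'mem, hsame_n⟩ := hsame n
  obtain ⟨hE'exec, hE'0a, hE'proj⟩ := hall E' hE'mem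
  have haa' : a ≠ a' := by
    intro h; rw [← h] at ha'Dom0; exact ha'Dom0 haDom0
  have hproj : ∀ (k : ℕ) (b : ℕ), b ≠ a' → (E' k).agentState b = (E k).agentState b := by
    intro k b hb
    conv_rhs => rw [← hE'proj k]
    rw [Config.setAgent_agentState, if_neg hb]
  have hpack : ∀ k : ℕ, (E' k).packetMsg = (E k).packetMsg := by
    intro k
    conv_rhs => rw [← hE'proj k]
    rfl
  -- the state of a' at time n is q
  have ha'n : (E' n).agentState a' = some q := by
    rw [hsame_n, hproj n a haa', haq]
  have ha'fresh : (E n).agentState a' = none := by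
    have : a' ∉ (E n).agentsDom := by rw [← hdomE]; exact ha'Dom0
    exact Option.eq_none_iff_forall_not_mem.mpr
      (fun qq hqq => this (by intro hcon; rw [hqq] at hcon; cases hcon))
  have hE'n : E' n = (E n).setAgent a' (some q) := by
    apply Config.ext'
    · funext b
      rw [Config.setAgent_agentState]
      rcases eq_or_ne b a' with rfl | hb
      · rw [if_pos rfl, ha'n]
      · rw [if_neg hb, hproj n b hb]
    · rw [hpack n]; rfl
  -- `E' n` is a stable consensus with value `φ x`
  have hstab' : IsStableConsensus P.Step P.out (E' n) (φ x) := by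
    rw [hE'n]
    exact htr (E n) (φ x) q hstab hnum a' ha'fresh
  -- `E' 0` is an input configuration for the incremented input
  have ha'0 : (E 0).agentState a' = none := by
    have : a' ∉ (E 0).agentsDom := ha'Dom0
    exact Option.eq_none_iff_forall_not_mem.mpr
      (fun qq hqq => this (by intro hcon; rw [hqq] at hcon; cases hcon))
  have hE'0 : E' 0 = (E 0).setAgent a' (some (P.Iin σ)) := by
    apply Config.ext'
    · funext b
      rw [Config.setAgent_agentState]
      rcases eq_or_ne b a' with rfl | hb
      · rw [if_pos rfl, hE'0a, hE0, (hSmem a).mp haS]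
      · rw [if_neg hb, hproj 0 b hb]
    · rw [hpack 0]; rfl
  set x' : Sg → ℕ := Function.update x σ (x σ + 1) with hx'
  have hinput : IsInputConfig P.Iin x' (E' 0) := by
    constructor
    · intro p
      rw [hE'0, Config.setAgent_packetMsg, hE0]
      exact hC0.1 p
    · intro q'
      rw [hE'0, hE0, Config.numInState_setAgent_fresh C0 a' (P.Iin σ)
        (by rw [← hE0]; exact ha'0) q', hC0.2 q']
      have hterm : ∀ τ : Sg, (if P.Iin τ = q' then x' τ else 0)
          = (if P.Iin τ = q' then x τ else 0) + (if τ = σ ∧ P.Iin τ = q' then 1 else 0) := by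
        intro τ
        rcases eq_or_ne τ σ with rfl | hτ
        · rw [hx', Function.update_self]
          by_cases hq' : P.Iin τ = q' <;> simp [hq']
        · rw [hx', Function.update_of_ne hτ]
          simp [hτ]
      rw [Finset.sum_congr rfl (fun τ _ => hterm τ), Finset.sum_add_distrib]
      congr 1
      rw [Finset.sum_eq_single σ]
      · rcases eq_or_ne (P.Iin σ) q' with h | h
        · simp [h]
        · simp [h, Ne.symm h]
      · intro τ _ hτ; simp [hτ]
      · intro h; exact absurd (Finset.mem_univ σ) h
  -- extend `E'` to a fair execution
  have hfin : IsFinExecution P.Step n E' := fun i _ => hE'exec i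
  obtain ⟨E'', hE''pre, hE''exec, hE''fair⟩ := hEv n E' hfin
  have hE''0 : E'' 0 = E' 0 := hE''pre 0 (Nat.zero_le n)
  obtain ⟨m, hstab''⟩ := himpl x' (E' 0) hinput E'' hE''exec hE''fair hE''0
  have hE''n : E'' n = E' n := hE''pre n le_rfl
  -- both stable consensus values agree on configuration `E'' (max n m)`
  have hr1 : Reaches P.Step (E'' n) (E'' (max n m)) :=
    reaches_of_exec hE''exec (le_max_left n m)
  have hr2 : Reaches P.Step (E'' m) (E'' (max n m)) :=
    reaches_of_exec hE''exec (le_max_right n m)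
  have hc1 : IsConsensus P.out (E'' (max n m)) (φ x) := by
    have := hstab' (E'' (max n m)) (by rw [← hE''n]; exact hr1)
    exact this
  have hc2 : IsConsensus P.out (E'' (max n m)) (φ x') := hstab'' _ hr2
  -- the configuration has at least one agent, namely `a'`
  have ha'dom'' : a' ∈ (E'' (max n m)).agentsDom := by
    have h0 : a' ∈ (E'' 0).agentsDom := by
      rw [hE''0, hE'0]
      intro hcon
      rw [Config.setAgent_agentState, if_pos rfl] at hcon
      cases hcon
    rw [← agentsDom_of_reaches hP (reaches_of_exec hE''exec (Nat.zero_le (max n m)))]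
    exact h0
  obtain ⟨q0, hq0⟩ := Option.ne_none_iff_exists'.mp ha'dom''
  rw [← hc2 a' q0 hq0, ← hc1 a' q0 hq0]
/-- If a predicate is implemented by a protocol that is both shadow-permitting and
truncatable, then it is a counting predicate. -/
theorem shadow_truncatable_implies_counting {Q M Sg : Type} [Fintype Q] [Nonempty Q]
    [Fintype M] [Fintype Sg] [Nonempty Sg] (P : Protocol Q M Sg)
    (hP : IsProtocolStep P.Step)
    (hEv : Eventual P.Step P.fair) (hAct : EnsuresActivity P.Step P.fair)
    (hshadow : ShadowPermitting P) (htrunc : ∃ K, TruncatableWith P.Step P.out K)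
    (φ : (Sg → ℕ) → Bool) (himpl : Implements P φ) :
    IsCountingPred φ := by
  obtain ⟨K, htr⟩ := htrunc
  exact counting_of_local φ (Fintype.card Q * K + 1)
    (fun x σ hx => key_mono P hP hEv hshadow htr φ himpl x σ hx)
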